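/- If C is a self-dual Z_4-code of length n, then the lattice A_4(C) = (1/2){x ∈ Z^n : x mod 4 ∈ C} is unimodular, i.e., equal to its dual lattice. -/
import Mathlib


open scoped Classical

/-- The lattice `A₄(C) = (1/2){x ∈ ℤⁿ : x mod 4 ∈ C}`. -/
def A4 {n : ℕ} (C : Submodule (ZMod 4) (Fin n → ZMod 4)) : Set (Fin n → ℝ) :=
  {v | ∃ x : Fin n → ℤ, (∀ i, v i = (x i : ℝ) / 2) ∧
    (fun i => (x i : ZMod 4)) ∈ C}

/-- The dual of a set of vectors in `ℝⁿ`. -/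
def dualLattice {n : ℕ} (L : Set (Fin n → ℝ)) : Set (Fin n → ℝ) :=
  {v | ∀ w ∈ L, ∃ m : ℤ, ∑ i, v i * w i = (m : ℝ)}

theorem stmt7 (n : ℕ) (C : Submodule (ZMod 4) (Fin n → ZMod 4))
    (hsd : ∀ x : Fin n → ZMod 4, x ∈ C ↔ ∀ c ∈ C, ∑ i, x i * c i = 0) :
    A4 C = dualLattice (A4 C) := by
  ext v
  constructor
  · rintro ⟨x, hv, hx⟩ w ⟨y, hw, hy⟩
    have h0 : ((∑ i, x i * y i : ℤ) : ZMod 4) = 0 := by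
      push_cast
      exact (hsd _).mp hx _ hy
    obtain ⟨m, hm⟩ := (ZMod.intCast_zmod_eq_zero_iff_dvd _ 4).mp h0
    refine ⟨m, ?_⟩
    have h1 : ∑ i, v i * w i = ((∑ i, x i * y i : ℤ) : ℝ) / 4 := by
      push_cast
      rw [Finset.sum_div]
      refine Finset.sum_congr rfl fun i _ => ?_
      rw [hv i, hw i]; ring
    rw [h1, hm]; push_cast; ring
  · intro hv
    have hx : ∀ i, ∃ m : ℤ, v i = (m : ℝ) / 2 := by
      intro i
      have hmem : (fun j => if j = i then (2:ℝ) else 0) ∈ A4 C := by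
        refine ⟨fun j => if j = i then 4 else 0, fun j => by dsimp only; split <;> norm_num, ?_⟩
        have : (fun j => (((if j = i then (4:ℤ) else 0) : ℤ) : ZMod 4)) = 0 := by
          funext j; split; · simp; decide
          · simp
        rw [this]; exact C.zero_mem
      obtain ⟨m, hm⟩ := hv _ hmem
      refine ⟨m, ?_⟩
      simp only [mul_ite, mul_zero, Finset.sum_ite_eq', Finset.mem_univ, if_true] at hm
      linarith
    choose x hxv using hx
    refine ⟨x, hxv, ?_⟩
    rw [hsd]
    intro c hc
    have hcmem : (fun i => (((c i).val : ℝ)) / 2) ∈ A4 C := by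
      refine ⟨fun i => ((c i).val : ℤ), fun i => by push_cast; ring, ?_⟩
      have : (fun i => ((((c i).val : ℤ)) : ZMod 4)) = c := by
        funext i; push_cast; simp [ZMod.natCast_val, ZMod.cast_id]
      rw [this]; exact hc
    obtain ⟨m, hm⟩ := hv _ hcmem
    have hsum : (∑ i, x i * ((c i).val : ℤ)) = 4 * m := by
      have h2 : ((∑ i, x i * ((c i).val : ℤ)) : ℝ) = ((4 * m : ℤ) : ℝ) := by
        push_cast
        have h3 : ∑ i, v i * (((c i).val : ℝ) / 2) = (m : ℝ) := hm
        have h4 : ∑ i, v i * (((c i).val : ℝ) / 2)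
            = (∑ i, (x i : ℝ) * ((c i).val : ℝ)) / 4 := by
          rw [Finset.sum_div]
          refine Finset.sum_congr rfl fun i _ => ?_
          rw [hxv i]; ring
        rw [h4] at h3
        linarith
      exact_mod_cast h2
    have h5 : ((∑ i, x i * ((c i).val : ℤ) : ℤ) : ZMod 4) = 0 := by
      rw [hsum]; push_cast; rw [show (4:ZMod 4) = 0 by decide]; ring
    have h6 : ((∑ i, x i * ((c i).val : ℤ) : ℤ) : ZMod 4)
        = ∑ i, (x i : ZMod 4) * c i := by
      push_cast
      refine Finset.sum_congr rfl fun i _ => ?_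
      simp [ZMod.natCast_val, ZMod.cast_id]
    rw [← h6, h5]
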